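/- Let E and F be nonempty closed convex sets in ℝⁿ. The following are equivalent: (a) E + F = ℝⁿ and for every u ∈ ℝⁿ the metric projections p_E(u) and p_F(u) are orthogonal, i.e., p_E(u) · p_F(u) = 0; (b) E and F are polar cones of each other, i.e., E = F° and F = E°. -/
import Mathlib


open RealInnerProductSpace Pointwise

/-- The (negative) polar set of `X`. -/
def polarSet {H : Type*} [NormedAddCommGroup H] [InnerProductSpace ℝ H] (X : Set H) : Set H :=
  {x | ∀ e ∈ X, ⟪x, e⟫ ≤ 0}

/-- `y` is the metric projection of `u` on `E`: it belongs to `E` and is nearest to `u`. -/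
def IsMetricProj {H : Type*} [NormedAddCommGroup H] [InnerProductSpace ℝ H]
    (E : Set H) (u y : H) : Prop :=
  y ∈ E ∧ ∀ x ∈ E, ‖u - y‖ ≤ ‖u - x‖

section Aux

variable {H : Type*} [NormedAddCommGroup H] [InnerProductSpace ℝ H]

private lemma bdd_aux (E : Set H) (u : H) :
    BddBelow (Set.range fun w : E => ‖u - (w : H)‖) :=
  ⟨0, by rintro b ⟨w, rfl⟩; exact norm_nonneg _⟩

lemma isMetricProj_iff {E : Set H} (hconv : Convex ℝ E) {u y : H} :
    IsMetricProj E u y ↔ y ∈ E ∧ ∀ w ∈ E, ⟪u - y, w - y⟫ ≤ 0 := by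
  constructor
  · rintro ⟨hy, hmin⟩
    haveI : Nonempty E := ⟨⟨y, hy⟩⟩
    refine ⟨hy, (norm_eq_iInf_iff_real_inner_le_zero hconv hy).1 ?_⟩
    exact le_antisymm (le_ciInf fun w => hmin w w.2) (ciInf_le (bdd_aux E u) ⟨y, hy⟩)
  · rintro ⟨hy, hvar⟩
    refine ⟨hy, fun x hx => ?_⟩
    rw [(norm_eq_iInf_iff_real_inner_le_zero hconv hy).2 hvar]
    exact ciInf_le (bdd_aux E u) ⟨x, hx⟩

lemma isMetricProj_exists [CompleteSpace H] {E : Set H} (hne : E.Nonempty) (hcl : IsClosed E)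
    (hconv : Convex ℝ E) (u : H) : ∃ y, IsMetricProj E u y := by
  obtain ⟨v, hv, heq⟩ := exists_norm_eq_iInf_of_complete_convex hne hcl.isComplete hconv u
  refine ⟨v, hv, fun x hx => ?_⟩
  rw [heq]
  exact ciInf_le (bdd_aux E u) ⟨x, hx⟩

lemma isMetricProj_unique {E : Set H} (hconv : Convex ℝ E) {u y y' : H}
    (h : IsMetricProj E u y) (h' : IsMetricProj E u y') : y = y' := by
  have h1 := ((isMetricProj_iff hconv).1 h).2 y' h'.1
  have h2 := ((isMetricProj_iff hconv).1 h').2 y h.1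
  have key : ⟪y - y', y - y'⟫ ≤ 0 := by
    have e : ⟪(u - y') - (u - y), y - y'⟫ = ⟪u - y', y - y'⟫ - ⟪u - y, y - y'⟫ :=
      inner_sub_left _ _ _
    have e2 : (u - y') - (u - y) = y - y' := by abel
    have e3 : ⟪u - y, y - y'⟫ = -⟪u - y, y' - y⟫ := by rw [← inner_neg_right, neg_sub]
    rw [e2, e3] at e
    linarith
  exact sub_eq_zero.1 (real_inner_self_nonpos.1 key)

variable [CompleteSpace H]

/-- Sub-polarity from the orthogonality of projections. -/
lemma subpolar_of {E F : Set H}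
    (hEne : E.Nonempty) (hEcl : IsClosed E) (hEconv : Convex ℝ E)
    (hFne : F.Nonempty) (hFcl : IsClosed F) (hFconv : Convex ℝ F)
    (horth : ∀ u y z : H, IsMetricProj E u y → IsMetricProj F u z → ⟪y, z⟫ = 0) :
    ∀ e ∈ E, ∀ f ∈ F, ⟪e, f⟫ ≤ 0 := by
  intro e he f hf
  set u := e + f with hu
  obtain ⟨y, hy⟩ := isMetricProj_exists hEne hEcl hEconv u
  obtain ⟨z, hz⟩ := isMetricProj_exists hFne hFcl hFconv u
  have ho : ⟪y, z⟫ = 0 := horth u y z hy hz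
  have h1 : ‖u - y‖ ^ 2 ≤ ‖f‖ ^ 2 := by
    have := hy.2 e he
    rw [show u - e = f by rw [hu]; abel] at this
    exact pow_le_pow_left₀ (norm_nonneg _) this 2
  have h2 : ‖u - z‖ ^ 2 ≤ ‖e‖ ^ 2 := by
    have := hz.2 f hf
    rw [show u - f = e by rw [hu]; abel] at this
    exact pow_le_pow_left₀ (norm_nonneg _) this 2
  have hC : ‖u - y - z‖ ^ 2 = ‖u - y‖ ^ 2 - 2 * ⟪u, z⟫ + ‖z‖ ^ 2 := by
    rw [norm_sub_sq_real (u - y) z, inner_sub_left, ho]; ring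
  have hB : ‖u - z‖ ^ 2 = ‖u‖ ^ 2 - 2 * ⟪u, z⟫ + ‖z‖ ^ 2 := norm_sub_sq_real u z
  have hD : ‖u‖ ^ 2 = ‖e‖ ^ 2 + 2 * ⟪e, f⟫ + ‖f‖ ^ 2 := by
    rw [hu]; exact norm_add_sq_real e f
  have hnn : 0 ≤ ‖u - y - z‖ ^ 2 := sq_nonneg _
  linarith

/-- Zero belongs to `F`, given the hypotheses of (a). -/
lemma zero_mem_of {E F : Set H}
    (hEne : E.Nonempty) (hEcl : IsClosed E) (hEconv : Convex ℝ E)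
    (hFne : F.Nonempty) (hFcl : IsClosed F) (hFconv : Convex ℝ F)
    (hsum : E + F = Set.univ)
    (horth : ∀ u y z : H, IsMetricProj E u y → IsMetricProj F u z → ⟪y, z⟫ = 0) :
    (0 : H) ∈ F := by
  obtain ⟨z0, hz0⟩ := isMetricProj_exists hFne hFcl hFconv (0 : H)
  suffices h : z0 = 0 by rw [← h]; exact hz0.1
  -- (π)
  have hπ : ∀ f ∈ F, ⟪z0, z0⟫ ≤ ⟪z0, f⟫ := by
    intro f hf
    have h := ((isMetricProj_iff hFconv).1 hz0).2 f hf
    have e : ⟪(0 : H) - z0, f - z0⟫ = -⟪z0, f⟫ + ⟪z0, z0⟫ := by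
      rw [zero_sub, inner_neg_left, inner_sub_right]; ring
    rw [e] at h; linarith
  -- the ray projection onto F is constantly z0
  have hproj : ∀ t : ℝ, 0 ≤ t → IsMetricProj F ((-t) • z0) z0 := by
    intro t ht
    refine (isMetricProj_iff hFconv).2 ⟨hz0.1, fun f hf => ?_⟩
    have e : (-t) • z0 - z0 = (-(t + 1)) • z0 := by module
    rw [e, real_inner_smul_left, inner_sub_right]
    nlinarith [hπ f hf]
  -- (ρ)
  have hρ : ∀ a ∈ E, 0 ≤ ⟪z0, a⟫ := by
    have hρ' : ∀ a ∈ E, ∀ t : ℝ, 0 ≤ t → 0 ≤ 2 * t * ⟪z0, a⟫ + ‖a‖ ^ 2 := by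
      intro a ha t ht
      obtain ⟨y, hy⟩ := isMetricProj_exists hEne hEcl hEconv ((-t) • z0)
      have ho : ⟪y, z0⟫ = 0 := horth _ y z0 hy (hproj t ht)
      have hyz : ⟪z0, y⟫ = 0 := by rw [real_inner_comm]; exact ho
      have hmin : ‖(-t) • z0 - y‖ ^ 2 ≤ ‖(-t) • z0 - a‖ ^ 2 :=
        pow_le_pow_left₀ (norm_nonneg _) (hy.2 a ha) 2
      rw [norm_sub_sq_real, norm_sub_sq_real, real_inner_smul_left, real_inner_smul_left,
        hyz] at hmin
      nlinarith [sq_nonneg ‖y‖]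
    intro a ha
    by_contra hneg
    push_neg at hneg
    have hc : 0 < -⟪z0, a⟫ := by linarith
    have h2c : (2 * -⟪z0, a⟫) ≠ 0 := ne_of_gt (by linarith)
    have hq : ‖a‖ ^ 2 / (2 * -⟪z0, a⟫) * (2 * -⟪z0, a⟫) = ‖a‖ ^ 2 := div_mul_cancel₀ _ h2c
    have ht : (0 : ℝ) ≤ ‖a‖ ^ 2 / (2 * -⟪z0, a⟫) + 1 := by
      have : (0 : ℝ) ≤ ‖a‖ ^ 2 / (2 * -⟪z0, a⟫) := div_nonneg (sq_nonneg _) (by linarith)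
      linarith
    have hh := hρ' a ha _ ht
    nlinarith [hq, hc, hh]
  -- decompose -z0
  have hmem : -z0 ∈ E + F := by rw [hsum]; trivial
  obtain ⟨e, he, f, hf, hef⟩ := Set.mem_add.1 hmem
  have h3 : ⟪z0, e⟫ + ⟪z0, f⟫ = -⟪z0, z0⟫ := by
    rw [← inner_add_right, hef, inner_neg_right]
  have h4 : ⟪z0, z0⟫ ≤ 0 := by
    have h1 := hρ e he
    have h2 := hπ f hf
    linarith
  exact real_inner_self_nonpos.1 h4

/-- The polar of `F` is contained in `E`, given the hypotheses of (a). -/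
lemma polar_subset_of {E F : Set H}
    (hEne : E.Nonempty) (hEcl : IsClosed E) (hEconv : Convex ℝ E)
    (hFne : F.Nonempty) (hFcl : IsClosed F) (hFconv : Convex ℝ F)
    (hsum : E + F = Set.univ)
    (horth : ∀ u y z : H, IsMetricProj E u y → IsMetricProj F u z → ⟪y, z⟫ = 0)
    (hF0 : (0 : H) ∈ F) : polarSet F ⊆ E := by
  intro x hx
  have hx' : ∀ f ∈ F, ⟪x, f⟫ ≤ 0 := hx
  obtain ⟨y, hy⟩ := isMetricProj_exists hEne hEcl hEconv x
  have hyE : y ∈ E := hy.1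
  have hvar : ∀ a ∈ E, ⟪x - y, a - y⟫ ≤ 0 := ((isMetricProj_iff hEconv).1 hy).2
  set v := x - y with hv
  -- key inequality along the ray x + s • v
  have key : ∀ s : ℝ, 0 ≤ s → ∀ f ∈ F, ⟪x, f⟫ + s * ⟪v, f⟫ ≤ 0 := by
    intro s hs
    set u := x + s • v with hu
    have hyu : IsMetricProj E u y := by
      refine (isMetricProj_iff hEconv).2 ⟨hyE, fun a ha => ?_⟩
      have e : u - y = (1 + s) • v := by rw [hu, hv]; module
      rw [e, real_inner_smul_left]
      exact mul_nonpos_of_nonneg_of_nonpos (by linarith) (hvar a ha)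
    obtain ⟨z, hz⟩ := isMetricProj_exists hFne hFcl hFconv u
    have ho : ⟪y, z⟫ = 0 := horth u y z hyu hz
    have hzvar : ∀ w ∈ F, ⟪u - z, w - z⟫ ≤ 0 := ((isMetricProj_iff hFconv).1 hz).2
    have hz0 : z = 0 := by
      have h1 := hzvar 0 hF0
      have e1 : ⟪u - z, (0 : H) - z⟫ = -⟪u, z⟫ + ⟪z, z⟫ := by
        rw [zero_sub, inner_neg_right, inner_sub_left]; ring
      rw [e1] at h1
      have e2 : ⟪u, z⟫ = ⟪x, z⟫ + s * (⟪x, z⟫ - ⟪y, z⟫) := by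
        rw [hu, inner_add_left, real_inner_smul_left, hv, inner_sub_left]
      rw [e2, ho] at h1
      have h2 : ⟪x, z⟫ ≤ 0 := hx' z hz.1
      refine real_inner_self_nonpos.1 ?_
      nlinarith
    intro f hf
    have h3 := hzvar f hf
    rw [hz0, sub_zero, sub_zero, hu, inner_add_left, real_inner_smul_left] at h3
    exact h3
  -- hence ⟪v, f⟫ ≤ 0 for all f ∈ F
  have hvf : ∀ f ∈ F, ⟪v, f⟫ ≤ 0 := by
    intro f hf
    by_contra hpos
    push_neg at hpos
    have hxf : ⟪x, f⟫ ≤ 0 := hx' f hf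
    have hs : (0 : ℝ) ≤ (1 - ⟪x, f⟫) / ⟪v, f⟫ := div_nonneg (by linarith) (le_of_lt hpos)
    have := key _ hs f hf
    rw [div_mul_cancel₀ _ (ne_of_gt hpos)] at this
    linarith
  -- decompose x and conclude v = 0
  have hmem : x ∈ E + F := by rw [hsum]; trivial
  obtain ⟨e, he, f, hf, hef⟩ := Set.mem_add.1 hmem
  have h4 : ⟪v, e - y⟫ ≤ 0 := hvar e he
  have h5 : ⟪v, f⟫ ≤ 0 := hvf f hf
  have h6 : ⟪v, (e - y) + f⟫ ≤ 0 := by rw [inner_add_right]; linarith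
  have e7 : (e - y) + f = v := by rw [hv, ← hef]; abel
  rw [e7] at h6
  have hv0 : v = 0 := real_inner_self_nonpos.1 h6
  have : x = y := by rw [← sub_eq_zero]; exact hv0
  rw [this]; exact hyE

lemma polarSet_convex (X : Set H) : Convex ℝ (polarSet X) := by
  intro x hx y hy a b ha hb hab f hf
  have h1 : ⟪x, f⟫ ≤ 0 := hx f hf
  have h2 : ⟪y, f⟫ ≤ 0 := hy f hf
  show ⟪a • x + b • y, f⟫ ≤ 0
  rw [inner_add_left, real_inner_smul_left, real_inner_smul_left]
  nlinarith

/-- The Moreau-type decomposition for mutually polar sets. -/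
lemma moreau_of {E F : Set H}
    (hEne : E.Nonempty) (hEcl : IsClosed E) (hEconv : Convex ℝ E) (hFconv : Convex ℝ F)
    (hEp : E = polarSet F) (hFp : F = polarSet E) (u : H) :
    ∃ y z : H, IsMetricProj E u y ∧ IsMetricProj F u z ∧ y + z = u ∧ ⟪y, z⟫ = 0 := by
  obtain ⟨y, hy⟩ := isMetricProj_exists hEne hEcl hEconv u
  have hyE : y ∈ E := hy.1
  have hyP : ∀ f ∈ F, ⟪y, f⟫ ≤ 0 := by rw [hEp] at hyE; exact hyE
  have hvar : ∀ a ∈ E, ⟪u - y, a - y⟫ ≤ 0 := ((isMetricProj_iff hEconv).1 hy).2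
  have h0E : (0 : H) ∈ E := by
    rw [hEp]; intro f hf; rw [inner_zero_left]
  have h2y : (2 : ℝ) • y ∈ E := by
    rw [hEp]; intro f hf; rw [real_inner_smul_left]
    have := hyP f hf
    linarith
  have hzy : ⟪u - y, y⟫ = 0 := by
    have ha := hvar 0 h0E
    rw [zero_sub, inner_neg_right] at ha
    have hb := hvar ((2 : ℝ) • y) h2y
    rw [show (2 : ℝ) • y - y = y by module] at hb
    linarith
  set z := u - y with hz
  have hzF : z ∈ F := by
    rw [hFp]
    intro a ha
    have := hvar a ha
    rw [inner_sub_right] at this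
    linarith [hzy]
  have hzproj : IsMetricProj F u z := by
    refine (isMetricProj_iff hFconv).2 ⟨hzF, fun w hw => ?_⟩
    have e1 : u - z = y := by rw [hz]; abel
    have e2 : ⟪y, z⟫ = 0 := by rw [hz, real_inner_comm]; exact hzy
    rw [e1, inner_sub_right, e2, sub_zero]
    exact hyP w hw
  have horthyz : ⟪y, z⟫ = 0 := by rw [hz, real_inner_comm]; exact hzy
  exact ⟨y, z, hy, hzproj, by rw [hz]; abel, horthyz⟩

end Aux

theorem orthogonal_projections_characterize_polar_cones
    (n : ℕ) (E F : Set (EuclideanSpace ℝ (Fin n)))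
    (hEne : E.Nonempty) (hEcl : IsClosed E) (hEconv : Convex ℝ E)
    (hFne : F.Nonempty) (hFcl : IsClosed F) (hFconv : Convex ℝ F) :
    (E + F = Set.univ ∧
      ∀ u y z : EuclideanSpace ℝ (Fin n),
        IsMetricProj E u y → IsMetricProj F u z → ⟪y, z⟫ = 0) ↔
      (E = polarSet F ∧ F = polarSet E) := by
  constructor
  · rintro ⟨hsum, horth⟩
    have hsum' : F + E = Set.univ := by rw [add_comm]; exact hsum
    have horth' : ∀ u y z : EuclideanSpace ℝ (Fin n),
        IsMetricProj F u y → IsMetricProj E u z → ⟪y, z⟫ = 0 := by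
      intro u y z h1 h2
      rw [real_inner_comm]
      exact horth u z y h2 h1
    have hF0 : (0 : EuclideanSpace ℝ (Fin n)) ∈ F :=
      zero_mem_of hEne hEcl hEconv hFne hFcl hFconv hsum horth
    have hE0 : (0 : EuclideanSpace ℝ (Fin n)) ∈ E :=
      zero_mem_of hFne hFcl hFconv hEne hEcl hEconv hsum' horth'
    have hsub := subpolar_of hEne hEcl hEconv hFne hFcl hFconv horth
    constructor
    · refine Set.Subset.antisymm ?_ ?_
      · intro e he f hf
        exact hsub e he f hf
      · exact polar_subset_of hEne hEcl hEconv hFne hFcl hFconv hsum horth hF0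
    · refine Set.Subset.antisymm ?_ ?_
      · intro f hf e he
        rw [real_inner_comm]
        exact hsub e he f hf
      · exact polar_subset_of hFne hFcl hFconv hEne hEcl hEconv hsum' horth' hE0
  · rintro ⟨hEp, hFp⟩
    have main := fun u => moreau_of hEne hEcl hEconv hFconv hEp hFp u
    constructor
    · refine Set.eq_univ_iff_forall.2 fun u => ?_
      obtain ⟨y, z, hy, hz, hyz, -⟩ := main u
      exact Set.mem_add.2 ⟨y, hy.1, z, hz.1, hyz⟩
    · intro u y' z' hy' hz'
      obtain ⟨y, z, hy, hz, hyz, ho⟩ := main u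
      rw [isMetricProj_unique hEconv hy' hy, isMetricProj_unique hFconv hz' hz]
      exact ho
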